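/- Let S = F₂[x,y,z] and p = (1+x+y+z, 1+xy+yz+zx) ⊆ S. Suppose m₁e₁ + m₂e₂ ∈ p where e₁, e₂ ∈ S are polynomials and m₁, m₂ are monomials with gcd(m₁,m₂)=1. Then either both e₁ ∈ p and e₂ ∈ p, or max(deg e₁, deg e₂) ≥ max(deg m₁, deg m₂). -/
import Mathlib

set_option synthInstance.maxHeartbeats 1000000
set_option maxHeartbeats 4000000

section NoStringsSetup

open Polynomial

abbrev F2 := ZMod 2

lemma irr : Irreducible (X^2 + X + 1 : F2[X]) := by
  have hd : (X^2 + X + 1 : F2[X]).natDegree = 2 := by compute_degree!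
  rw [Polynomial.irreducible_iff_roots_eq_zero_of_degree_le_three (by omega) (by omega)]
  have h0 : (X^2 + X + 1 : F2[X]) ≠ 0 := by
    intro h; rw [h] at hd; simp at hd
  rw [Multiset.eq_zero_iff_forall_notMem]
  intro a ha
  rw [mem_roots h0] at ha
  simp only [IsRoot, eval_add, eval_pow, eval_X, eval_one] at ha
  revert a ha; decide

noncomputable abbrev K := AdjoinRoot (X^2 + X + 1 : F2[X])

instance : Fact (Irreducible (X^2 + X + 1 : F2[X])) := ⟨irr⟩

noncomputable def om : K := AdjoinRoot.root _

lemma hom : om^2 + om + 1 = 0 := by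
  have := AdjoinRoot.isRoot_root (X^2 + X + 1 : F2[X])
  simpa [om, IsRoot] using this

abbrev S := MvPolynomial (Fin 3) F2

noncomputable def g₁ : S := 1 + MvPolynomial.X 0 + MvPolynomial.X 1 + MvPolynomial.X 2
noncomputable def g₂ : S := 1 + MvPolynomial.X 0 * MvPolynomial.X 1
  + MvPolynomial.X 1 * MvPolynomial.X 2 + MvPolynomial.X 2 * MvPolynomial.X 0

noncomputable def P : Ideal S := Ideal.span {g₁, g₂}

noncomputable def v : Fin 3 → K[X] :=
  ![1 + C om * X, 1 + X, 1 + C (om + 1) * X]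

noncomputable def φ : S →ₐ[F2] K[X] := MvPolynomial.aeval v

lemma h2S : (2 : S) = 0 := by
  have h := map_ofNat (MvPolynomial.C : F2 →+* S) 2
  have h2 : (2 : F2) = 0 := by decide
  rw [h2] at h
  simpa using h.symm

lemma h2K : (2 : K[X]) = 0 := by
  have h := map_ofNat ((Polynomial.C : K →+* K[X]).comp (algebraMap F2 K)) 2
  have h2 : (2 : F2) = 0 := by decide
  rw [h2] at h
  simpa using h.symm

lemma h2F : (2 : F2[X]) = 0 := by
  have h := map_ofNat (Polynomial.C : F2 →+* F2[X]) 2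
  have h2 : (2 : F2) = 0 := by decide
  rw [h2] at h
  simpa using h.symm

lemma homt : (C om)^2 + C om + 1 = (0 : K[X]) := by
  have := congrArg (Polynomial.C : K → K[X]) hom
  simpa using this

lemma phi_X0 : φ (MvPolynomial.X 0) = 1 + C om * X := by simp [φ, v]
lemma phi_X1 : φ (MvPolynomial.X 1) = 1 + X := by simp [φ, v]
lemma phi_X2 : φ (MvPolynomial.X 2) = 1 + C (om+1) * X := by simp [φ, v]

lemma phi_g1 : φ g₁ = 0 := by
  simp only [g₁, map_add, map_one, phi_X0, phi_X1, phi_X2, C_add, C_1]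
  linear_combination (C om * X + X + 2 : K[X]) * h2K

lemma phi_g2 : φ g₂ = 0 := by
  simp only [g₂, map_add, map_mul, map_one, phi_X0, phi_X1, phi_X2, C_add, C_1]
  linear_combination (X^2 : K[X]) * homt +
    (2 + (2*C om + 2) * X + C om * X^2) * h2K

lemma g1_mem : g₁ ∈ P := Ideal.subset_span (by simp)
lemma g2_mem : g₂ ∈ P := Ideal.subset_span (by simp)

lemma phi_of_mem {f : S} (hf : f ∈ P) : φ f = 0 := by
  have : P ≤ RingHom.ker (φ : S →+* K[X]) := by
    rw [P, Ideal.span_le]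
    rintro g (rfl | rfl)
    · simpa [RingHom.mem_ker] using phi_g1
    · simpa [RingHom.mem_ker] using phi_g2
  simpa [RingHom.mem_ker] using this hf

noncomputable def Q : S := MvPolynomial.X 0^2 + MvPolynomial.X 0 * MvPolynomial.X 1
  + MvPolynomial.X 1^2 + MvPolynomial.X 0 + MvPolynomial.X 1 + 1

lemma q_eq : Q = g₂ + g₁ * (MvPolynomial.X 0 + MvPolynomial.X 1) := by
  simp only [Q, g₁, g₂]
  linear_combination (-(MvPolynomial.X 0*MvPolynomial.X 1) - MvPolynomial.X 1*MvPolynomial.X 2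
    - MvPolynomial.X 2*MvPolynomial.X 0 : S) * h2S

lemma q_mem : Q ∈ P := by
  rw [q_eq]; exact add_mem g2_mem (Ideal.mul_mem_right _ P g1_mem)

noncomputable def A (p : F2[X]) : S := Polynomial.aeval (MvPolynomial.X 1) p

lemma A_add (p q : F2[X]) : A (p + q) = A p + A q := map_add _ _ _
lemma A_mul (p q : F2[X]) : A (p * q) = A p * A q := map_mul _ _ _
lemma A_X : A X = MvPolynomial.X 1 := aeval_X _
lemma A_one : A 1 = 1 := map_one _
lemma A_pow (p : F2[X]) (n : ℕ) : A (p^n) = A p ^ n := map_pow _ _ _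

noncomputable def μ (p₀ p₁ : F2[X]) : S := A p₀ + MvPolynomial.X 0 * A p₁

lemma step (i : Fin 3) (p₀ p₁ : F2[X]) :
    ∃ q₀ q₁, μ p₀ p₁ * MvPolynomial.X i + μ q₀ q₁ ∈ P := by
  fin_cases i
  · show ∃ q₀ q₁, μ p₀ p₁ * MvPolynomial.X 0 + μ q₀ q₁ ∈ P
    refine ⟨p₁*(X^2+X+1), p₀ + p₁*(X+1), ?_⟩
    have he : μ p₀ p₁ * MvPolynomial.X 0 + μ (p₁*(X^2+X+1)) (p₀ + p₁*(X+1)) = Q * A p₁ := by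
      simp only [μ, Q, A_add, A_mul, A_pow, A_X, A_one]
      linear_combination (A p₀ * MvPolynomial.X 0 : S) * h2S
    rw [he]; exact Ideal.mul_mem_right _ P q_mem
  · show ∃ q₀ q₁, μ p₀ p₁ * MvPolynomial.X 1 + μ q₀ q₁ ∈ P
    refine ⟨p₀*X, p₁*X, ?_⟩
    have he : μ p₀ p₁ * MvPolynomial.X 1 + μ (p₀*X) (p₁*X) = 0 := by
      simp only [μ, A_add, A_mul, A_X]
      linear_combination (A p₀ * MvPolynomial.X 1 + MvPolynomial.X 0 * A p₁ * MvPolynomial.X 1 : S) * h2S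
    rw [he]; exact zero_mem _
  · show ∃ q₀ q₁, μ p₀ p₁ * MvPolynomial.X 2 + μ q₀ q₁ ∈ P
    refine ⟨p₀ + p₁*(X^2+X+1) + p₀*X, p₁ + p₀ + p₁*(X+1) + p₁*X, ?_⟩
    have he : μ p₀ p₁ * MvPolynomial.X 2
        + μ (p₀ + p₁*(X^2+X+1) + p₀*X) (p₁ + p₀ + p₁*(X+1) + p₁*X)
        = μ p₀ p₁ * g₁ + Q * A p₁ := by
      simp only [μ, Q, g₁, A_add, A_mul, A_pow, A_X, A_one]
      linear_combination (-(MvPolynomial.X 0^2 * A p₁) : S) * h2S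
    rw [he]
    exact add_mem (Ideal.mul_mem_left P _ g1_mem) (Ideal.mul_mem_right _ P q_mem)

lemma reduce (f : S) : ∃ p₀ p₁, f + μ p₀ p₁ ∈ P := by
  induction f using MvPolynomial.induction_on with
  | C a =>
      refine ⟨Polynomial.C a, 0, ?_⟩
      have : MvPolynomial.C a + μ (Polynomial.C a) 0 = MvPolynomial.C a * 2 := by
        simp only [μ, A]
        simp
        ring
      rw [this, h2S, mul_zero]; exact zero_mem _
  | add f g hf hg =>
      obtain ⟨p₀, p₁, hp⟩ := hf
      obtain ⟨q₀, q₁, hq⟩ := hg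
      refine ⟨p₀ + q₀, p₁ + q₁, ?_⟩
      have : f + g + μ (p₀+q₀) (p₁+q₁) = (f + μ p₀ p₁) + (g + μ q₀ q₁) := by
        simp only [μ, A_add]; ring
      rw [this]; exact add_mem hp hq
  | mul_X f i hf =>
      obtain ⟨p₀, p₁, hp⟩ := hf
      obtain ⟨q₀, q₁, hq⟩ := step i p₀ p₁
      refine ⟨q₀, q₁, ?_⟩
      have : f * MvPolynomial.X i + μ q₀ q₁
          = (f + μ p₀ p₁) * MvPolynomial.X i + (μ p₀ p₁ * MvPolynomial.X i + μ q₀ q₁)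
            - 2 * (μ p₀ p₁ * MvPolynomial.X i) := by ring
      rw [this, h2S]
      simpa using add_mem (Ideal.mul_mem_right _ P hp) hq

noncomputable def Ψ : F2[X] →ₐ[F2] F2[X] := Polynomial.aeval (1 + X)

lemma psi_psi (p : F2[X]) : Ψ (Ψ p) = p := by
  have h1 : Ψ ((1:F2[X]) + X) = X := by
    simp only [Ψ, map_add, map_one, Polynomial.aeval_X]
    linear_combination h2F
  have := Polynomial.aeval_algHom_apply Ψ ((1:F2[X]) + X) p
  rw [h1] at this
  rw [Ψ] at this ⊢
  rw [← this, Polynomial.aeval_X_left_apply]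

noncomputable def ι : F2 →+* K := algebraMap F2 K

lemma indep (r s : F2) (h : ι r + om * ι s = 0) : r = 0 ∧ s = 0 := by
  have hcase : ∀ t : F2, t = 0 ∨ t = 1 := by decide
  rcases hcase r with rfl | rfl <;> rcases hcase s with rfl | rfl
  · exact ⟨rfl, rfl⟩
  · exfalso
    simp only [map_zero, map_one, zero_add, mul_one] at h
    have h1 := hom
    rw [h] at h1
    simp at h1
  · exfalso
    simp only [map_zero, map_one, mul_zero, add_zero] at h
    exact one_ne_zero h
  · exfalso
    simp only [map_one, mul_one] at h
    have hm : om = -1 := by linear_combination h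
    have h1 := hom
    rw [hm] at h1
    norm_num at h1

noncomputable def M : F2[X] →ₐ[F2] K[X] := Polynomial.mapAlgHom (Algebra.ofId F2 K)

lemma aeval_eq_M_psi (p : F2[X]) : Polynomial.aeval ((1:K[X]) + X) p = M (Ψ p) := by
  have : (Polynomial.aeval ((1:K[X]) + X) : F2[X] →ₐ[F2] K[X]) = M.comp Ψ := by
    apply Polynomial.algHom_ext
    simp [M, Ψ, Polynomial.coe_mapAlgHom, Algebra.ofId]
  rw [this]; rfl

lemma phi_mu (p₀ p₁ : F2[X]) :
    φ (μ p₀ p₁) = M (Ψ p₀) + (1 + C om * X) * M (Ψ p₁) := by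
  have hA : ∀ p, φ (A p) = Polynomial.aeval ((1:K[X]) + X) p := by
    intro p
    have := Polynomial.aeval_algHom_apply φ (MvPolynomial.X 1) p
    rw [phi_X1] at this
    rw [A, ← this]
  simp only [μ, map_add, map_mul, hA, phi_X0, aeval_eq_M_psi]

lemma mu_zero (p₀ p₁ : F2[X]) (h : φ (μ p₀ p₁) = 0) : p₀ = 0 ∧ p₁ = 0 := by
  rw [phi_mu] at h
  have hE : M (Ψ p₀) + M (Ψ p₁) + C om * (X * M (Ψ p₁)) = 0 := by linear_combination h
  have hM : ∀ (q : F2[X]) (n : ℕ), (M q).coeff n = ι (q.coeff n) := by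
    intro q n
    rw [M, Polynomial.coe_mapAlgHom, Polynomial.coeff_map]
    rfl
  have hV : Ψ p₁ = 0 := by
    ext n
    have hc := congrArg (fun q => Polynomial.coeff q (n+1)) hE
    simp only [Polynomial.coeff_add, Polynomial.coeff_C_mul, Polynomial.coeff_X_mul,
      Polynomial.coeff_zero, hM] at hc
    rw [← map_add] at hc
    exact ((indep _ _ hc).2 : (Ψ p₁).coeff n = 0).trans (Polynomial.coeff_zero n).symm
  have hU : Ψ p₀ = 0 := by
    rw [hV] at hE
    simp only [map_zero, mul_zero, add_zero, zero_mul] at hE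
    have hinj : Function.Injective (Polynomial.map ι) := Polynomial.map_injective ι ι.injective
    have : Polynomial.map ι (Ψ p₀) = Polynomial.map ι 0 := by
      rw [Polynomial.map_zero]
      rw [M, Polynomial.coe_mapAlgHom] at hE
      exact hE
    exact hinj this
  constructor
  · rw [← psi_psi p₀, hU, map_zero]
  · rw [← psi_psi p₁, hV, map_zero]

lemma mem_P_iff (f : S) : f ∈ P ↔ φ f = 0 := by
  constructor
  · exact phi_of_mem
  · intro hf
    obtain ⟨p₀, p₁, h⟩ := reduce f
    have hmu : φ (μ p₀ p₁) = 0 := by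
      have h2 := phi_of_mem h
      rw [map_add, hf, zero_add] at h2
      exact h2
    obtain ⟨h0, h1⟩ := mu_zero p₀ p₁ hmu
    rw [h0, h1] at h
    have hz : μ 0 0 = 0 := by simp [μ, A]
    rwa [hz, add_zero] at h

lemma om_ne : om ≠ 0 := by
  intro h
  have h1 := hom
  rw [h] at h1
  norm_num at h1

lemma om1_ne : om + 1 ≠ 0 := by
  intro h
  have hm : om = -1 := by linear_combination h
  have h1 := hom
  rw [hm] at h1
  norm_num at h1

lemma v0 : v 0 = 1 + C om * X := rfl
lemma v1 : v 1 = 1 + X := rfl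
lemma v2 : v 2 = 1 + C (om + 1) * X := rfl

lemma v_deg (i : Fin 3) : (v i).natDegree = 1 := by
  fin_cases i
  · show (v 0).natDegree = 1
    rw [v0]
    compute_degree!
    exact om_ne
  · show (v 1).natDegree = 1
    rw [v1]
    compute_degree!
  · show (v 2).natDegree = 1
    rw [v2]
    compute_degree!
    exact om1_ne

lemma v_ne (i : Fin 3) : v i ≠ 0 := by
  intro h
  have := v_deg i
  rw [h] at this
  simp at this

lemma phi_monomial (d : Fin 3 →₀ ℕ) :
    φ (MvPolynomial.monomial d 1) = v 0 ^ d 0 * v 1 ^ d 1 * v 2 ^ d 2 := by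
  rw [φ, MvPolynomial.aeval_monomial, map_one, one_mul]
  rw [Finsupp.prod_fintype]
  · rw [Fin.prod_univ_three]
  · intro i; exact pow_zero _

lemma phi_monomial_ne (d : Fin 3 →₀ ℕ) : φ (MvPolynomial.monomial d 1) ≠ 0 := by
  rw [phi_monomial]
  exact mul_ne_zero (mul_ne_zero (pow_ne_zero _ (v_ne 0)) (pow_ne_zero _ (v_ne 1)))
    (pow_ne_zero _ (v_ne 2))

lemma phi_monomial_deg (d : Fin 3 →₀ ℕ) :
    (φ (MvPolynomial.monomial d 1)).natDegree = (MvPolynomial.monomial d (1:F2)).totalDegree := by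
  rw [phi_monomial, MvPolynomial.totalDegree_monomial _ (one_ne_zero)]
  rw [Polynomial.natDegree_mul (mul_ne_zero (pow_ne_zero _ (v_ne 0)) (pow_ne_zero _ (v_ne 1)))
    (pow_ne_zero _ (v_ne 2)),
    Polynomial.natDegree_mul (pow_ne_zero _ (v_ne 0)) (pow_ne_zero _ (v_ne 1))]
  rw [Polynomial.natDegree_pow, Polynomial.natDegree_pow, Polynomial.natDegree_pow,
    v_deg, v_deg, v_deg]
  rw [Finsupp.sum_fintype _ _ (fun _ => rfl), Fin.sum_univ_three]
  ring

lemma phi_deg_le (e : S) : (φ e).natDegree ≤ e.totalDegree := by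
  conv_lhs => rw [MvPolynomial.as_sum e]
  rw [map_sum]
  apply Polynomial.natDegree_sum_le_of_forall_le
  intro d hd
  rw [φ, MvPolynomial.aeval_monomial]
  refine le_trans (Polynomial.natDegree_mul_le) ?_
  have h1 : (algebraMap F2 (K[X]) (MvPolynomial.coeff d e)).natDegree = 0 := by
    rw [Polynomial.algebraMap_apply]
    exact Polynomial.natDegree_C _
  rw [h1, zero_add]
  rw [Finsupp.prod_fintype _ _ (fun i => pow_zero _), Fin.prod_univ_three]
  refine le_trans (Polynomial.natDegree_mul_le) ?_
  have hle : ∀ (i : Fin 3), (v i ^ d i).natDegree ≤ d i := by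
    intro i
    refine le_trans (Polynomial.natDegree_pow_le) ?_
    rw [v_deg]; omega
  have h3 := MvPolynomial.le_totalDegree hd
  have hsum : (d.sum fun _ n => n) = d 0 + d 1 + d 2 := by
    rw [Finsupp.sum_fintype _ _ (fun _ => rfl), Fin.sum_univ_three]
  refine le_trans (add_le_add (le_trans (Polynomial.natDegree_mul_le)
    (add_le_add (hle 0) (hle 1))) (hle 2)) ?_
  omega

lemma cop01 : IsCoprime (v 0) (v 1) := by
  refine ⟨C om, C om + 1, ?_⟩
  rw [v0, v1]
  linear_combination (X:K[X]) * homt + C om * h2K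

lemma cop02 : IsCoprime (v 0) (v 2) := by
  refine ⟨C om + 1, C om, ?_⟩
  rw [v0, v2, Polynomial.C_add, Polynomial.C_1]
  linear_combination (C om + (C om^2 + C om)*(X:K[X])) * h2K

lemma cop12 : IsCoprime (v 1) (v 2) := by
  refine ⟨C om, C om + 1, ?_⟩
  rw [v1, v2, Polynomial.C_add, Polynomial.C_1]
  linear_combination (X:K[X]) * homt + (C om + C om * (X:K[X])) * h2K

lemma cop_pow_same (p : K[X]) {a b : ℕ} (h : a = 0 ∨ b = 0) : IsCoprime (p^a) (p^b) := by
  rcases h with rfl | rfl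
  · rw [pow_zero]; exact isCoprime_one_left
  · rw [pow_zero]; exact isCoprime_one_right

lemma cop_phi (d₁ d₂ : Fin 3 →₀ ℕ) (hcop : ∀ i, d₁ i = 0 ∨ d₂ i = 0) :
    IsCoprime (φ (MvPolynomial.monomial d₁ 1)) (φ (MvPolynomial.monomial d₂ 1)) := by
  rw [phi_monomial, phi_monomial]
  have c00 := cop_pow_same (v 0) (hcop 0)
  have c11 := cop_pow_same (v 1) (hcop 1)
  have c22 := cop_pow_same (v 2) (hcop 2)
  have c01 : IsCoprime (v 0 ^ d₁ 0) (v 1 ^ d₂ 1) := cop01.pow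
  have c02 : IsCoprime (v 0 ^ d₁ 0) (v 2 ^ d₂ 2) := cop02.pow
  have c10 : IsCoprime (v 1 ^ d₁ 1) (v 0 ^ d₂ 0) := cop01.symm.pow
  have c12 : IsCoprime (v 1 ^ d₁ 1) (v 2 ^ d₂ 2) := cop12.pow
  have c20 : IsCoprime (v 2 ^ d₁ 2) (v 0 ^ d₂ 0) := cop02.symm.pow
  have c21 : IsCoprime (v 2 ^ d₁ 2) (v 1 ^ d₂ 1) := cop12.symm.pow
  exact ((c00.mul_right c01).mul_right c02).mul_left
    ((c10.mul_right c11).mul_right c12) |>.mul_left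
    ((c20.mul_right c21).mul_right c22)

end NoStringsSetup

open MvPolynomial

/-- (No-strings rule for the cubic code, algebraic core.)  In `S = F₂[x,y,z]` with
`p = (1+x+y+z, 1+xy+yz+zx)`, if `m₁e₁ + m₂e₂ ∈ p` for monomials `m₁, m₂` sharing no
common variable, then either both `e₁ ∈ p` and `e₂ ∈ p`, or
`max(deg e₁, deg e₂) ≥ max(deg m₁, deg m₂)`. -/
theorem statement_5 (d₁ d₂ : Fin 3 →₀ ℕ) (hcop : ∀ i, d₁ i = 0 ∨ d₂ i = 0)
    (e₁ e₂ : MvPolynomial (Fin 3) (ZMod 2))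
    (p : Ideal (MvPolynomial (Fin 3) (ZMod 2)))
    (hp : p = Ideal.span
      {1 + X 0 + X 1 + X 2, 1 + X 0 * X 1 + X 1 * X 2 + X 2 * X 0})
    (hmem : monomial d₁ 1 * e₁ + monomial d₂ 1 * e₂ ∈ p) :
    (e₁ ∈ p ∧ e₂ ∈ p) ∨
      max (monomial d₁ (1 : ZMod 2)).totalDegree (monomial d₂ (1 : ZMod 2)).totalDegree ≤
        max e₁.totalDegree e₂.totalDegree := by
  have hPeq : p = P := hp
  subst hPeq
  have h0 : φ (monomial d₁ 1) * φ e₁ = φ (monomial d₂ 1) * φ e₂ := by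
    have h := phi_of_mem hmem
    rw [map_add, map_mul, map_mul] at h
    linear_combination h - (φ (monomial d₂ 1) * φ e₂) * h2K
  by_cases he1 : φ e₁ = 0
  · left
    have he2 : φ e₂ = 0 := by
      rw [he1, mul_zero] at h0
      rcases mul_eq_zero.mp h0.symm with h | h
      · exact absurd h (phi_monomial_ne d₂)
      · exact h
    exact ⟨(mem_P_iff e₁).mpr he1, (mem_P_iff e₂).mpr he2⟩
  · right
    have he2 : φ e₂ ≠ 0 := by
      intro h
      rw [h, mul_zero] at h0
      rcases mul_eq_zero.mp h0 with h' | h'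
      · exact phi_monomial_ne d₁ h'
      · exact he1 h'
    have hcp := cop_phi d₁ d₂ hcop
    have hd1 : φ (monomial d₁ 1) ∣ φ (monomial d₂ 1) * φ e₂ := ⟨φ e₁, h0.symm⟩
    have hd2 : φ (monomial d₂ 1) ∣ φ (monomial d₁ 1) * φ e₁ := ⟨φ e₂, h0⟩
    have hdvd1 : φ (monomial d₁ 1) ∣ φ e₂ := hcp.dvd_of_dvd_mul_left hd1
    have hdvd2 : φ (monomial d₂ 1) ∣ φ e₁ := hcp.symm.dvd_of_dvd_mul_left hd2
    have h1 : (monomial d₁ (1:ZMod 2)).totalDegree ≤ e₂.totalDegree := by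
      rw [← phi_monomial_deg]
      exact le_trans (Polynomial.natDegree_le_of_dvd hdvd1 he2) (phi_deg_le e₂)
    have h2 : (monomial d₂ (1:ZMod 2)).totalDegree ≤ e₁.totalDegree := by
      rw [← phi_monomial_deg]
      exact le_trans (Polynomial.natDegree_le_of_dvd hdvd2 he1) (phi_deg_le e₁)
    exact max_le (le_trans h1 (le_max_right _ _)) (le_trans h2 (le_max_left _ _))
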